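/- arXiv:1506.04726 — 5 statements merged into one kernel-verified Lean document; each statement's English description precedes it below -/
import Mathlib

section
/- Let n ≥ 2 and let S be a finite set with |S| = n + 2. Let d ∈ ℝ and let m : (subsets of S) → ℝ. For a subset T ⊆ S let c(T) := 1 if |T| ≤ n − 1 and c(T) := 0 otherwise. For every partition of S into three nonempty parts G ⊔ J ⊔ L = S set A_{G,J,L} := d − c(G)·m_G − c(J)·m_J − c(L)·m_L + c(J∪L)·m_{J∪L} + c(J∪G)·m_{J∪G} + c(L∪G)·m_{L∪G}, and for every partition into four nonempty parts I ⊔ G ⊔ J ⊔ L = S set B_{I,G,J,L} := m_I − c(I∪G)·m_{I∪G} − c(I∪J)·m_{I∪J} − c(I∪L)·m_{I∪L} + c(I∪J∪L)·m_{I∪J∪L} + c(I∪G∪J)·m_{I∪G∪J} + c(I∪G∪L)·m_{I∪G∪L}. Assume A_{G,J,L} ≥ 0 for every partition of S into three nonempty parts and B_{I,G,J,L} ≥ 0 for every partition of S into four nonempty parts. Then for every nonempty I ⊆ S with |I| ≤ n − 1 one has 0 ≤ m_I ≤ d, and for all nonempty I ⊆ J ⊆ S with |J| ≤ n − 1 one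 has m_J ≤ m_I. (Lemma: any F-nef divisor dH − Σ_I m_I E_I on the Kapranov model of the moduli space of stable rational curves satisfies d ≥ m_I ≥ 0 and m_I ≥ m_J for I ⊆ J.) -/
/-- The combinatorial coefficient `c(T)`: equal to `1` if `|T| ≤ n - 1` and `0`
otherwise (i.e. if `|T| ≥ n`). -/
noncomputable def fCoef {S : Type*} [DecidableEq S] (n : ℕ) (T : Finset S) : ℝ :=
  if T.card ≤ n - 1 then 1 else 0

section Aux

variable {S : Type*} [Fintype S] [DecidableEq S] {n : ℕ}

lemma fCoef_one {T : Finset S} (hn : 1 ≤ n) (h : T.card + 1 ≤ n) : fCoef n T = 1 :=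
  if_pos (by omega)

lemma fCoef_zero {T : Finset S} (hn : 1 ≤ n) (h : n ≤ T.card) : fCoef n T = 0 :=
  if_neg (by omega)

lemma usingl (s : Finset S) (a : S) : s ∪ {a} = insert a s := by
  ext b; simp [or_comm]

lemma singlu (s : Finset S) (a : S) : {a} ∪ s = insert a s := by
  ext b; simp

variable (hn : 2 ≤ n) (hS : Fintype.card S = n + 2) (m : Finset S → ℝ)
variable (hB : ∀ I G J L : Finset S, I.Nonempty → G.Nonempty → J.Nonempty → L.Nonempty →
      Disjoint I G → Disjoint I J → Disjoint I L →
      Disjoint G J → Disjoint G L → Disjoint J L → I ∪ G ∪ J ∪ L = Finset.univ →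
      0 ≤ m I - fCoef n (I ∪ G) * m (I ∪ G) - fCoef n (I ∪ J) * m (I ∪ J)
        - fCoef n (I ∪ L) * m (I ∪ L) + fCoef n (I ∪ J ∪ L) * m (I ∪ J ∪ L)
        + fCoef n (I ∪ G ∪ J) * m (I ∪ G ∪ J) + fCoef n (I ∪ G ∪ L) * m (I ∪ G ∪ L))

include hn hS hB

/-- Nonnegativity for sets of maximal admissible size `n - 1`. -/
lemma nonneg_max (I : Finset S) (hI : I.card + 1 = n) : 0 ≤ m I := by
  have hIc : Iᶜ.card = 3 := by
    have := Finset.card_compl I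
    omega
  obtain ⟨g, j, l, hgj, hgl, hjl, hC⟩ := Finset.card_eq_three.mp hIc
  have hg : g ∉ I := by
    have : g ∈ Iᶜ := by rw [hC]; simp
    simpa using this
  have hj : j ∉ I := by
    have : j ∈ Iᶜ := by rw [hC]; simp
    simpa using this
  have hl : l ∉ I := by
    have : l ∈ Iᶜ := by rw [hC]; simp
    simpa using this
  have hIne : I.Nonempty := by
    rw [← Finset.card_pos]; omega
  have huniv : I ∪ {g} ∪ {j} ∪ {l} = Finset.univ := by
    ext a
    by_cases ha : a ∈ I
    · simp [ha]
    · have : a ∈ Iᶜ := Finset.mem_compl.mpr ha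
      rw [hC] at this
      simp only [Finset.mem_insert, Finset.mem_singleton] at this
      simp; tauto
  have key := hB I {g} {j} {l} hIne ⟨g, by simp⟩ ⟨j, by simp⟩ ⟨l, by simp⟩
    (by simp [hg]) (by simp [hj]) (by simp [hl])
    (Finset.disjoint_singleton.mpr hgj) (Finset.disjoint_singleton.mpr hgl)
    (Finset.disjoint_singleton.mpr hjl) huniv
  have c1 : fCoef n (I ∪ {g}) = 0 := by
    apply fCoef_zero (by omega)
    rw [usingl, Finset.card_insert_of_notMem hg]; omega
  have c2 : fCoef n (I ∪ {j}) = 0 := by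
    apply fCoef_zero (by omega)
    rw [usingl, Finset.card_insert_of_notMem hj]; omega
  have c3 : fCoef n (I ∪ {l}) = 0 := by
    apply fCoef_zero (by omega)
    rw [usingl, Finset.card_insert_of_notMem hl]; omega
  have c4 : fCoef n (I ∪ {j} ∪ {l}) = 0 := by
    apply fCoef_zero (by omega)
    calc n ≤ (I ∪ {j}).card := by rw [usingl, Finset.card_insert_of_notMem hj]; omega
    _ ≤ (I ∪ {j} ∪ {l}).card := Finset.card_le_card Finset.subset_union_left
  have c5 : fCoef n (I ∪ {g} ∪ {j}) = 0 := by
    apply fCoef_zero (by omega)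
    calc n ≤ (I ∪ {g}).card := by rw [usingl, Finset.card_insert_of_notMem hg]; omega
    _ ≤ (I ∪ {g} ∪ {j}).card := Finset.card_le_card Finset.subset_union_left
  have c6 : fCoef n (I ∪ {g} ∪ {l}) = 0 := by
    apply fCoef_zero (by omega)
    calc n ≤ (I ∪ {g}).card := by rw [usingl, Finset.card_insert_of_notMem hg]; omega
    _ ≤ (I ∪ {g} ∪ {l}).card := Finset.card_le_card Finset.subset_union_left
  rw [c1, c2, c3, c4, c5, c6] at key
  linarith

/-- One-step monotonicity: inserting one element decreases `m`, provided the
resulting set still has card `≤ n - 1`. -/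
lemma step_mono : ∀ k : ℕ, ∀ I : Finset S, ∀ x : S, I.Nonempty → x ∉ I →
    I.card + k + 2 = n → m (insert x I) ≤ m I := by
  intro k
  induction k using Nat.strong_induction_on with
  | _ k ih =>
    intro I x hIne hx hcard
    -- the complement of `insert x I` has `k + 3` elements
    have hcompl : ((insert x I)ᶜ : Finset S).card = k + 3 := by
      have h1 : (insert x I).card = I.card + 1 := Finset.card_insert_of_notMem hx
      have h2 := Finset.card_compl (insert x I)
      omega
    obtain ⟨j, hjmem⟩ : ((insert x I)ᶜ : Finset S).Nonempty := by
      rw [← Finset.card_pos]; omega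
    have hjI : j ∉ I := by
      have := Finset.mem_compl.mp hjmem
      simp only [Finset.mem_insert] at this
      tauto
    have hjx : j ≠ x := by
      have := Finset.mem_compl.mp hjmem
      simp only [Finset.mem_insert] at this
      tauto
    set L : Finset S := ((insert x I)ᶜ).erase j with hLdef
    have hLcard : L.card = k + 2 := by
      rw [hLdef, Finset.card_erase_of_mem hjmem, hcompl]
      omega
    have hLne : L.Nonempty := by rw [← Finset.card_pos]; omega
    have hLsub : L ⊆ (insert x I)ᶜ := Finset.erase_subset _ _
    have hxL : x ∉ L := fun h => by
      have := Finset.mem_compl.mp (hLsub h); simp at this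
    have hjL : j ∉ L := Finset.notMem_erase _ _
    have hIL : Disjoint I L := by
      rw [Finset.disjoint_right]
      intro a haL haI
      have := Finset.mem_compl.mp (hLsub haL)
      simp [haI] at this
    have huniv : I ∪ {x} ∪ {j} ∪ L = Finset.univ := by
      have h1 : ({j} : Finset S) ∪ L = (insert x I)ᶜ := by
        rw [singlu, hLdef, Finset.insert_erase hjmem]
      calc I ∪ {x} ∪ {j} ∪ L = (I ∪ {x}) ∪ ({j} ∪ L) := by rw [Finset.union_assoc]
      _ = Finset.univ := by
        rw [h1, usingl, Finset.union_compl]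
    have key := hB I {x} {j} L hIne ⟨x, by simp⟩ ⟨j, by simp⟩ hLne
      (by simp [hx]) (by simp [hjI]) hIL
      (Finset.disjoint_singleton.mpr hjx.symm) (by simp [hxL]) (by simp [hjL]) huniv
    have cIx : fCoef n (I ∪ {x}) = 1 := by
      apply fCoef_one (by omega)
      rw [usingl, Finset.card_insert_of_notMem hx]; omega
    have cIj : fCoef n (I ∪ {j}) = 1 := by
      apply fCoef_one (by omega)
      rw [usingl, Finset.card_insert_of_notMem hjI]; omega
    have hIxj : I ∪ {x} ∪ {j} = insert x (insert j I) := by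
      rw [usingl, usingl, Finset.insert_comm]
    have cIL : fCoef n (I ∪ L) = 0 := by
      apply fCoef_zero (by omega)
      rw [Finset.card_union_of_disjoint hIL]; omega
    have cIjL : fCoef n (I ∪ {j} ∪ L) = 0 := by
      apply fCoef_zero (by omega)
      have hd : Disjoint (I ∪ {j}) L := by
        rw [Finset.disjoint_union_left]
        exact ⟨hIL, by simp [hjL]⟩
      rw [Finset.card_union_of_disjoint hd, usingl, Finset.card_insert_of_notMem hjI]
      omega
    have cIxL : fCoef n (I ∪ {x} ∪ L) = 0 := by
      apply fCoef_zero (by omega)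
      have hd : Disjoint (I ∪ {x}) L := by
        rw [Finset.disjoint_union_left]
        exact ⟨hIL, by simp [hxL]⟩
      rw [Finset.card_union_of_disjoint hd, usingl, Finset.card_insert_of_notMem hx]
      omega
    rw [cIx, cIj, cIL, cIjL, cIxL] at key
    rcases Nat.eq_zero_or_pos k with hk | hk
    · -- base case : `I.card = n - 2`
      subst hk
      have cIxj : fCoef n (I ∪ {x} ∪ {j}) = 0 := by
        apply fCoef_zero (by omega)
        rw [hIxj, Finset.card_insert_of_notMem (by simp [hx, hjx.symm] : x ∉ insert j I),
          Finset.card_insert_of_notMem hjI]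
        omega
      have hnn : 0 ≤ m (insert j I) := by
        apply nonneg_max hn hS m hB
        rw [Finset.card_insert_of_notMem hjI]; omega
      rw [cIxj] at key
      rw [usingl I x, usingl I j] at key
      linarith
    · -- inductive step
      have cIxj : fCoef n (I ∪ {x} ∪ {j}) = 1 := by
        apply fCoef_one (by omega)
        rw [hIxj, Finset.card_insert_of_notMem (by simp [hx, hjx.symm] : x ∉ insert j I),
          Finset.card_insert_of_notMem hjI]
        omega
      have hihstep : m (insert x (insert j I)) ≤ m (insert j I) := by
        apply ih (k - 1) (by omega) (insert j I) x ⟨j, by simp⟩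
          (by simp [hx, hjx.symm])
        rw [Finset.card_insert_of_notMem hjI]; omega
      rw [cIxj, hIxj] at key
      rw [usingl I x, usingl I j] at key
      linarith

/-- Full monotonicity. -/
lemma mono (I J : Finset S) (hIne : I.Nonempty) (hIJ : I ⊆ J) (hJ : J.card + 1 ≤ n) :
    m J ≤ m I := by
  have key : ∀ k : ℕ, ∀ J : Finset S, I ⊆ J → J.card + 1 ≤ n → (J \ I).card = k →
      m J ≤ m I := by
    intro k
    induction k with
    | zero =>
      intro J h1 _ h3
      have hempty : J \ I = ∅ := Finset.card_eq_zero.mp h3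
      have hJI : J = I := Finset.Subset.antisymm (by
        intro a ha
        by_contra haI
        have : a ∈ J \ I := Finset.mem_sdiff.mpr ⟨ha, haI⟩
        rw [hempty] at this
        simp at this) h1
      rw [hJI]
    | succ k ihk =>
      intro J h1 h2 h3
      obtain ⟨x, hx⟩ : (J \ I).Nonempty := by rw [← Finset.card_pos]; omega
      obtain ⟨hxJ, hxI⟩ := Finset.mem_sdiff.mp hx
      set J' := J.erase x with hJ'def
      have hIJ' : I ⊆ J' := fun a ha =>
        Finset.mem_erase.mpr ⟨fun h => hxI (h ▸ ha), h1 ha⟩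
      have hJ'card : J'.card = J.card - 1 := Finset.card_erase_of_mem hxJ
      have hJeq : J = insert x J' := (Finset.insert_erase hxJ).symm
      have hJ'ne : J'.Nonempty := hIne.mono hIJ'
      have hJpos : 1 ≤ J.card := Finset.card_pos.mpr ⟨x, hxJ⟩
      have hstep : m (insert x J') ≤ m J' := by
        apply step_mono hn hS m hB (n - 2 - J'.card) J' x hJ'ne
          (Finset.notMem_erase _ _)
        have : I.card ≤ J'.card := Finset.card_le_card hIJ'
        have : 1 ≤ I.card := Finset.card_pos.mpr hIne
        omega
      have hsd : J' \ I = (J \ I).erase x := by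
        ext a
        simp only [Finset.mem_sdiff, Finset.mem_erase, hJ'def]
        tauto
      have hcd : (J' \ I).card = k := by
        rw [hsd, Finset.card_erase_of_mem hx, h3]
        omega
      calc m J = m (insert x J') := by rw [← hJeq]
      _ ≤ m J' := by
          have hIc : 1 ≤ I.card := Finset.card_pos.mpr hIne
          rcases Nat.lt_or_ge J'.card (J.card) with h | h
          · exact hstep
          · omega
      _ ≤ m I := ihk J' hIJ' (by omega) hcd
  exact key (J \ I).card J hIJ hJ rfl

/-- Nonnegativity in general. -/
lemma nonneg (I : Finset S) (hIne : I.Nonempty) (hI : I.card + 1 ≤ n) : 0 ≤ m I := by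
  obtain ⟨J, hIJ, _, hJcard⟩ :=
    Finset.exists_subsuperset_card_eq (Finset.subset_univ I)
      (show I.card ≤ n - 1 by omega)
      (by rw [Finset.card_univ, hS]; omega)
  have h1 : m J ≤ m I := mono hn hS m hB I J hIne hIJ (by omega)
  have h2 : 0 ≤ m J := nonneg_max hn hS m hB J (by omega)
  linarith

end Aux

/-- Any F-nef divisor `dH - Σ_I m_I E_I` on the Kapranov model of `M‾₀,ₙ₊₃`
(iterated blow-up of `ℙⁿ` along the linear spans of subsets of `n + 2` general points)
satisfies `0 ≤ m_I ≤ d` and `m_J ≤ m_I` for `I ⊆ J`. -/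
theorem stmt_7 (n : ℕ) (hn : 2 ≤ n) (S : Type*) [Fintype S] [DecidableEq S]
    (hS : Fintype.card S = n + 2) (d : ℝ) (m : Finset S → ℝ)
    (hA : ∀ G J L : Finset S, G.Nonempty → J.Nonempty → L.Nonempty →
      Disjoint G J → Disjoint G L → Disjoint J L → G ∪ J ∪ L = Finset.univ →
      0 ≤ d - fCoef n G * m G - fCoef n J * m J - fCoef n L * m L
        + fCoef n (J ∪ L) * m (J ∪ L) + fCoef n (J ∪ G) * m (J ∪ G)
        + fCoef n (L ∪ G) * m (L ∪ G))
    (hB : ∀ I G J L : Finset S, I.Nonempty → G.Nonempty → J.Nonempty → L.Nonempty →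
      Disjoint I G → Disjoint I J → Disjoint I L →
      Disjoint G J → Disjoint G L → Disjoint J L → I ∪ G ∪ J ∪ L = Finset.univ →
      0 ≤ m I - fCoef n (I ∪ G) * m (I ∪ G) - fCoef n (I ∪ J) * m (I ∪ J)
        - fCoef n (I ∪ L) * m (I ∪ L) + fCoef n (I ∪ J ∪ L) * m (I ∪ J ∪ L)
        + fCoef n (I ∪ G ∪ J) * m (I ∪ G ∪ J) + fCoef n (I ∪ G ∪ L) * m (I ∪ G ∪ L)) :
    (∀ I : Finset S, I.Nonempty → I.card ≤ n - 1 → 0 ≤ m I ∧ m I ≤ d) ∧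
    (∀ I J : Finset S, I.Nonempty → I ⊆ J → J.card ≤ n - 1 → m J ≤ m I) := by
  have hmono : ∀ I J : Finset S, I.Nonempty → I ⊆ J → J.card ≤ n - 1 → m J ≤ m I := by
    intro I J hIne hIJ hJ
    exact mono hn hS m hB I J hIne hIJ (by omega)
  refine ⟨fun I hIne hIcard => ⟨nonneg hn hS m hB I hIne (by omega), ?_⟩, hmono⟩
  -- upper bound `m I ≤ d` via the A-inequalities
  have hIcard' : I.card + 1 ≤ n := by omega
  have hcompl : (Iᶜ : Finset S).card = n + 2 - I.card := by
    have := Finset.card_compl I; omega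
  obtain ⟨j, hjmem⟩ : (Iᶜ : Finset S).Nonempty := by rw [← Finset.card_pos]; omega
  have hjI : j ∉ I := Finset.mem_compl.mp hjmem
  set L : Finset S := Iᶜ.erase j with hLdef
  have hLcard : L.card = n + 1 - I.card := by
    rw [hLdef, Finset.card_erase_of_mem hjmem, hcompl]; omega
  have hLne : L.Nonempty := by rw [← Finset.card_pos]; omega
  have hLsub : L ⊆ Iᶜ := Finset.erase_subset _ _
  have hjL : j ∉ L := Finset.notMem_erase _ _
  have hIL : Disjoint I L := by
    rw [Finset.disjoint_right]
    intro a haL haI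
    exact (Finset.mem_compl.mp (hLsub haL)) haI
  have hjLu : ({j} : Finset S) ∪ L = Iᶜ := by
    rw [singlu, hLdef, Finset.insert_erase hjmem]
  have huniv : I ∪ {j} ∪ L = Finset.univ := by
    rw [Finset.union_assoc, hjLu, Finset.union_compl]
  have key := hA I {j} L hIne ⟨j, by simp⟩ hLne
    (by simp [hjI]) hIL (by simp [hjL]) huniv
  have hIc1 : 1 ≤ I.card := Finset.card_pos.mpr hIne
  have cI : fCoef n I = 1 := fCoef_one (by omega) hIcard'
  have cj : fCoef n ({j} : Finset S) = 1 := by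
    apply fCoef_one (by omega)
    rw [Finset.card_singleton]; omega
  have cLIun : fCoef n (L ∪ I) = 0 := by
    apply fCoef_zero (by omega)
    rw [Finset.card_union_of_disjoint hIL.symm]; omega
  rw [cI, cj, cLIun, hjLu] at key
  -- fact 1 : fCoef n ({j} ∪ I) * m ({j} ∪ I) ≤ m {j}
  have fact1 : fCoef n ({j} ∪ I) * m ({j} ∪ I) ≤ m ({j} : Finset S) := by
    have hjIcard : ({j} ∪ I : Finset S).card = I.card + 1 := by
      rw [singlu, Finset.card_insert_of_notMem hjI]
    by_cases h2 : I.card + 2 ≤ n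
    · rw [fCoef_one (by omega) (by rw [hjIcard]; omega), one_mul]
      apply mono hn hS m hB {j} ({j} ∪ I) ⟨j, by simp⟩ Finset.subset_union_left
      rw [hjIcard]; omega
    · rw [fCoef_zero (by omega) (by rw [hjIcard]; omega), zero_mul]
      exact nonneg hn hS m hB {j} ⟨j, by simp⟩ (by simp; omega)
  -- fact 2 : fCoef n Iᶜ * m Iᶜ ≤ fCoef n L * m L
  have fact2 : fCoef n (Iᶜ : Finset S) * m Iᶜ ≤ fCoef n L * m L := by
    by_cases h3 : 3 ≤ I.card
    · have cc : fCoef n (Iᶜ : Finset S) = 1 := by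
        apply fCoef_one (by omega); omega
      have cL : fCoef n L = 1 := by
        apply fCoef_one (by omega); omega
      rw [cc, cL, one_mul, one_mul]
      exact mono hn hS m hB L Iᶜ hLne hLsub (by omega)
    · have cc : fCoef n (Iᶜ : Finset S) = 0 := by
        apply fCoef_zero (by omega); omega
      rw [cc, zero_mul]
      by_cases hL : L.card + 1 ≤ n
      · rw [fCoef_one (by omega) hL, one_mul]
        exact nonneg hn hS m hB L hLne hL
      · rw [fCoef_zero (by omega) (by omega), zero_mul]
  linarith
end

section
/- Let n ≥ 4 and s = n + 3, let ε be a positive rational number, and let d, m_1, …, m_{n+3} be integers satisfying ε·m_i ≥ n − 1 for every i and ε·(m_i + m_j − d) ≤ n − 3 for all i ≠ j. For a subset I ⊆ {1,…,n+3} and an integer t ≥ 1 with r_{I,σ_t} := |I| + 2t − 1 ≤ n, set k_{I,σ_t} := max{0, t·Σ_{i=1}^{n+3} m_i + Σ_{i∈I} m_i − ((n+1)·t + |I| − 1)·d}. Then ε·k_{I,σ_t} ≤ max{0, n − 1 − 2·r_{I,σ_t}}. In particular, for every t ≥ 1 and every I with |I| = n − 2t + 1, one has k_{I,σ_t} = 0.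 (This is the key inequality 'low mult of joins': the strict transform of D meets the blow-up of the joins J(L_I, σ_t) of linear cycles with secant varieties of the rational normal curve with small multiplicity, which yields log-canonicity of (X_{n+3,(0)}, εD).) -/
/-- Key inequality "low mult of joins": under the log-canonicity hypotheses
`ε·mᵢ ≥ n - 1` and `ε·(mᵢ + mⱼ - d) ≤ n - 3`, for every `I ⊆ {1,…,n+3}` and `t ≥ 1` with
`r_{I,σ_t} = |I| + 2t - 1 ≤ n` one has `ε·k_{I,σ_t} ≤ max{0, n - 1 - 2·r_{I,σ_t}}`,
where `k_{I,σ_t} = max{0, t·Σᵢ mᵢ + Σ_{i∈I} mᵢ - ((n+1)t + |I| - 1)d}`. In particular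
`k_{I,σ_t} = 0` whenever `|I| = n - 2t + 1`. -/
theorem stmt_9 (n : ℕ) (hn : 4 ≤ n)
    (ε : ℚ) (hε : 0 < ε) (d : ℤ) (m : Fin (n + 3) → ℤ)
    (h1 : ∀ i, (n : ℚ) - 1 ≤ ε * (m i : ℚ))
    (h2 : ∀ i j, i ≠ j → ε * ((m i : ℚ) + (m j : ℚ) - (d : ℚ)) ≤ (n : ℚ) - 3) :
    (∀ (I : Finset (Fin (n + 3))) (t : ℕ), 1 ≤ t → I.card + 2 * t - 1 ≤ n →
      ε * max 0 ((t : ℚ) * (∑ i, (m i : ℚ)) + (∑ i ∈ I, (m i : ℚ)) -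
          (((n : ℚ) + 1) * t + (I.card : ℚ) - 1) * (d : ℚ)) ≤
        max 0 ((n : ℚ) - 1 - 2 * ((I.card : ℚ) + 2 * t - 1))) ∧
    (∀ (I : Finset (Fin (n + 3))) (t : ℕ), 1 ≤ t → (I.card : ℤ) = (n : ℤ) - 2 * t + 1 →
      max 0 ((t : ℚ) * (∑ i, (m i : ℚ)) + (∑ i ∈ I, (m i : ℚ)) -
          (((n : ℚ) + 1) * t + (I.card : ℚ) - 1) * (d : ℚ)) = 0) := by
  set S : ℚ := ∑ i, (m i : ℚ) with hS
  -- per-point aggregated pair inequality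
  have key : ∀ i : Fin (n + 3), ε * (((n:ℚ)+2) * (m i : ℚ) + (S - (m i : ℚ)) - ((n:ℚ)+2) * d)
      ≤ ((n:ℚ)+2) * ((n:ℚ) - 3) := by
    intro i
    have hsum : ∑ j ∈ Finset.univ.erase i, ε * ((m i : ℚ) + (m j : ℚ) - d)
        ≤ ∑ _j ∈ Finset.univ.erase i, ((n:ℚ) - 3) := by
      apply Finset.sum_le_sum
      intro j hj
      exact h2 i j (fun h => (Finset.mem_erase.mp hj).1 h.symm)
    have hcard : (Finset.univ.erase i).card = n + 2 := by
      rw [Finset.card_erase_of_mem (Finset.mem_univ i), Finset.card_univ, Fintype.card_fin]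
      omega
    have hms : ∑ j ∈ Finset.univ.erase i, (m j : ℚ) = S - (m i : ℚ) := by
      rw [hS, ← Finset.sum_erase_add _ _ (Finset.mem_univ i)]; ring
    have hlhs : ∑ j ∈ Finset.univ.erase i, ε * ((m i : ℚ) + (m j : ℚ) - d)
        = ε * (((n:ℚ)+2) * (m i : ℚ) + (S - (m i : ℚ)) - ((n:ℚ)+2) * d) := by
      rw [← Finset.mul_sum]
      congr 1
      rw [Finset.sum_sub_distrib, Finset.sum_add_distrib, hms, Finset.sum_const,
        Finset.sum_const, hcard]
      push_cast; ring
    have hrhs : ∑ _j ∈ Finset.univ.erase i, ((n:ℚ) - 3) = ((n:ℚ)+2) * ((n:ℚ)-3) := by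
      rw [Finset.sum_const, hcard]; push_cast; ring
    rw [hlhs, hrhs] at hsum
    exact hsum
  -- aggregate A : sum over all i
  have hA : ε * (2 * S - ((n:ℚ)+3) * d) ≤ ((n:ℚ)+3) * ((n:ℚ)-3) := by
    have hsum := Finset.sum_le_sum (fun i (_ : i ∈ (Finset.univ : Finset (Fin (n+3)))) => key i)
    have hl : ∑ i : Fin (n+3), ε * (((n:ℚ)+2) * (m i : ℚ) + (S - (m i : ℚ)) - ((n:ℚ)+2) * d)
        = ((n:ℚ)+2) * (ε * (2 * S - ((n:ℚ)+3) * d)) := by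
      rw [← Finset.mul_sum]
      have : ∑ i : Fin (n+3), (((n:ℚ)+2) * (m i : ℚ) + (S - (m i : ℚ)) - ((n:ℚ)+2) * d)
          = ((n:ℚ)+2) * (2 * S - ((n:ℚ)+3) * d) := by
        rw [Finset.sum_sub_distrib, Finset.sum_add_distrib, Finset.sum_sub_distrib,
          ← Finset.mul_sum, ← hS, Finset.sum_const, Finset.sum_const, Finset.card_univ,
          Fintype.card_fin]
        push_cast; ring
      rw [this]; ring
    have hr : ∑ _i : Fin (n+3), ((n:ℚ)+2) * ((n:ℚ)-3)
        = ((n:ℚ)+3) * (((n:ℚ)+2) * ((n:ℚ)-3)) := by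
      rw [Finset.sum_const, Finset.card_univ, Fintype.card_fin]; push_cast; ring
    rw [hl, hr] at hsum
    have hpos : (0:ℚ) < (n:ℚ) + 2 := by positivity
    nlinarith [hsum]
  -- aggregate C : sum of h1
  have hC : ((n:ℚ)+3) * ((n:ℚ)-1) ≤ ε * S := by
    have hsum := Finset.sum_le_sum (fun i (_ : i ∈ (Finset.univ : Finset (Fin (n+3)))) => h1 i)
    rw [← Finset.mul_sum, ← hS, Finset.sum_const, Finset.card_univ, Fintype.card_fin,
      nsmul_eq_mul] at hsum
    push_cast at hsum
    linarith
  -- main part 1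
  have main : ∀ (I : Finset (Fin (n + 3))) (t : ℕ), 1 ≤ t → I.card + 2 * t - 1 ≤ n →
      ε * max 0 ((t : ℚ) * S + (∑ i ∈ I, (m i : ℚ)) -
          (((n : ℚ) + 1) * t + (I.card : ℚ) - 1) * (d : ℚ)) ≤
        max 0 ((n : ℚ) - 1 - 2 * ((I.card : ℚ) + 2 * t - 1)) := by
    intro I t ht hr
    set T : ℚ := ∑ i ∈ I, (m i : ℚ) with hT
    set c : ℚ := (I.card : ℚ) with hc
    set expr : ℚ := (t : ℚ) * S + T - (((n : ℚ) + 1) * t + c - 1) * d with hexpr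
    rcases le_or_gt expr 0 with hle | hpos
    · rw [max_eq_left hle]
      simpa using le_max_left (0:ℚ) _
    · rw [max_eq_right hpos.le]
      refine le_trans ?_ (le_max_right 0 _)
      -- aggregate B : sum of key over I
      have hB : ε * (((n:ℚ)+1) * T + c * S - c * ((n:ℚ)+2) * d) ≤ c * ((n:ℚ)+2) * ((n:ℚ)-3) := by
        have hsum := Finset.sum_le_sum (fun i (_ : i ∈ I) => key i)
        have hl : ∑ i ∈ I, ε * (((n:ℚ)+2) * (m i : ℚ) + (S - (m i : ℚ)) - ((n:ℚ)+2) * d)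
            = ε * (((n:ℚ)+1) * T + c * S - c * ((n:ℚ)+2) * d) := by
          rw [← Finset.mul_sum]
          congr 1
          rw [Finset.sum_sub_distrib, Finset.sum_add_distrib, Finset.sum_sub_distrib,
            ← Finset.mul_sum, ← hT, Finset.sum_const, Finset.sum_const, nsmul_eq_mul,
            nsmul_eq_mul, ← hc]
          ring
        have hr2 : ∑ _i ∈ I, ((n:ℚ)+2) * ((n:ℚ)-3) = c * (((n:ℚ)+2) * ((n:ℚ)-3)) := by
          rw [Finset.sum_const, nsmul_eq_mul, ← hc]
        rw [hl, hr2] at hsum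
        linarith
      -- numeric bounds on c, t, n
      have ht1 : (1:ℚ) ≤ (t:ℚ) := by exact_mod_cast ht
      have hn4 : (4:ℚ) ≤ (n:ℚ) := by exact_mod_cast hn
      have hcn : c + 2 * (t:ℚ) ≤ (n:ℚ) + 1 := by
        have : I.card + 2 * t ≤ n + 1 := by omega
        rw [hc]; exact_mod_cast this
      have hc0 : (0:ℚ) ≤ c := by rw [hc]; positivity
      -- weights
      have w1 : (0:ℚ) ≤ ((n:ℚ)+1)^2 * t - c - (n:ℚ) - 1 := by nlinarith
      have w3 : (0:ℚ) ≤ ((n:ℚ)+1) * (((n:ℚ)-1) * t + c - 2) := by nlinarith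
      have s1 : (0:ℚ) ≤ ((n:ℚ)+3) * ((n:ℚ)-3) - ε * (2 * S - ((n:ℚ)+3) * d) := by linarith
      have s2 : (0:ℚ) ≤ c * ((n:ℚ)+2) * ((n:ℚ)-3) -
          ε * (((n:ℚ)+1) * T + c * S - c * ((n:ℚ)+2) * d) := by linarith
      have s3 : (0:ℚ) ≤ ε * S - ((n:ℚ)+3) * ((n:ℚ)-1) := by linarith
      have p1 := mul_nonneg w1 s1
      have p2 : (0:ℚ) ≤ ((n:ℚ)+3) * (c * ((n:ℚ)+2) * ((n:ℚ)-3) -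
          ε * (((n:ℚ)+1) * T + c * S - c * ((n:ℚ)+2) * d)) := by
        apply mul_nonneg _ s2; positivity
      have p3 := mul_nonneg w3 s3
      have hW : (0:ℚ) < ((n:ℚ)+1) * ((n:ℚ)+3) := by positivity
      have hident : ((n:ℚ)+1) * ((n:ℚ)+3) * (((n:ℚ) - 1 - 2 * (c + 2 * (t:ℚ) - 1)) - ε * expr)
          = (((n:ℚ)+1)^2 * t - c - (n:ℚ) - 1) *
              (((n:ℚ)+3) * ((n:ℚ)-3) - ε * (2 * S - ((n:ℚ)+3) * d))
            + ((n:ℚ)+3) * (c * ((n:ℚ)+2) * ((n:ℚ)-3) -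
                ε * (((n:ℚ)+1) * T + c * S - c * ((n:ℚ)+2) * d))
            + ((n:ℚ)+1) * (((n:ℚ)-1) * t + c - 2) * (ε * S - ((n:ℚ)+3) * ((n:ℚ)-1)) := by
        rw [hexpr]; ring
      have hnn : (0:ℚ) ≤ ((n:ℚ)+1) * ((n:ℚ)+3) *
          (((n:ℚ) - 1 - 2 * (c + 2 * (t:ℚ) - 1)) - ε * expr) := by
        rw [hident]; linarith [p1, p2, p3]
      linarith [nonneg_of_mul_nonneg_right hnn hW]
  refine ⟨main, ?_⟩
  intro I t ht hcard
  have h2t : 2 * t ≤ n + 1 := by omega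
  have hcard' : I.card + 2 * t - 1 ≤ n := by omega
  have := main I t ht hcard'
  have hcq : (I.card : ℚ) = (n:ℚ) - 2 * t + 1 := by exact_mod_cast hcard
  rw [hcq] at this ⊢
  have hrhs : max (0:ℚ) ((n : ℚ) - 1 - 2 * (((n:ℚ) - 2 * t + 1) + 2 * t - 1)) = 0 := by
    apply max_eq_left
    have hn4 : (4:ℚ) ≤ (n:ℚ) := by exact_mod_cast hn
    linarith
  rw [hrhs] at this
  have hmax : (0:ℚ) ≤ max 0 ((t : ℚ) * S + (∑ i ∈ I, (m i : ℚ)) -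
      (((n : ℚ) + 1) * t + ((n:ℚ) - 2 * t + 1) - 1) * (d : ℚ)) := le_max_left _ _
  have hM0 : max (0:ℚ) ((t : ℚ) * S + (∑ i ∈ I, (m i : ℚ)) -
      (((n : ℚ) + 1) * t + ((n:ℚ) - 2 * t + 1) - 1) * (d : ℚ)) ≤ 0 := by
    nlinarith [this, hmax, hε]
  exact le_antisymm hM0 hmax
end

section
/- Let ν ≥ 2 and set n = 2ν. Let ε be a rational number with 0 < ε ≤ 2/ν, and let d, m_1, …, m_{2ν+3} be integers satisfying ε·m_i ≥ 2ν − 1 for every i and ε·(m_i + m_j − d) ≤ 2ν − 3 for all i ≠ j. Set k_C := max{0, Σ_{i=1}^{2ν+3} m_i − 2ν·d}. Then there exists an integer α ≥ 0 such that k_C ≤ ν·α, ν·α ≤ m_i for every i, and α ≤ d − m_i for every i. (Existence of the integer α with k_C/ν ≤ α ≤ min_i{m_i/ν, d − m_i} used to split off α copies of the smooth strict transform of the ν-th secant variety σ_ν, of class (ν+1)H − ν·Σ E_i, in the even-dimensional case of the abundance theorem.) -/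
/-- Existence of the integer `α` with `k_C/ν ≤ α ≤ min_i{mᵢ/ν, d - mᵢ}` used to split
off `α` copies of the strict transform of the `ν`-th secant variety `σ_ν` in the
even-dimensional (`n = 2ν`) case of the abundance theorem. -/
theorem stmt_10 (ν : ℕ) (hν : 2 ≤ ν)
    (ε : ℚ) (hε0 : 0 < ε) (hε : ε ≤ 2 / (ν : ℚ))
    (d : ℤ) (m : Fin (2 * ν + 3) → ℤ)
    (h1 : ∀ i, 2 * (ν : ℚ) - 1 ≤ ε * (m i : ℚ))
    (h2 : ∀ i j, i ≠ j → ε * ((m i : ℚ) + (m j : ℚ) - (d : ℚ)) ≤ 2 * (ν : ℚ) - 3) :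
    ∃ α : ℤ, 0 ≤ α ∧
      max 0 ((∑ i, m i) - 2 * (ν : ℤ) * d) ≤ (ν : ℤ) * α ∧
      (∀ i, (ν : ℤ) * α ≤ m i) ∧
      (∀ i, α ≤ d - m i) := by
  have hc : (2:ℚ) ≤ (ν:ℚ) := by exact_mod_cast hν
  have hcpos : (0:ℚ) < (ν:ℚ) := by linarith
  have hE : ε * (ν:ℚ) ≤ 2 := by
    rw [le_div_iff₀ hcpos] at hε; exact hε
  have : Nontrivial (Fin (2*ν+3)) := Fin.nontrivial_iff_two_le.mpr (by omega)
  -- hB : ε * m i + 2 ≤ ε * d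
  have hB : ∀ i : Fin (2*ν+3), ε * (m i : ℚ) + 2 ≤ ε * (d:ℚ) := by
    intro i
    obtain ⟨j, hj⟩ := exists_ne i
    have h2' := h2 i j hj.symm
    have h1j := h1 j
    rw [mul_sub, mul_add] at h2'
    linarith
  -- the big sum inequality
  have hsum1 : ∀ i : Fin (2*ν+3),
      ∑ j ∈ Finset.univ.erase i, (ε * ((m i:ℚ) + (m j:ℚ) - (d:ℚ)))
        ≤ (2*(ν:ℚ)+2) * (2*(ν:ℚ)-3) := by
    intro i
    have hcard : (Finset.univ.erase i).card = 2*ν+2 := by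
      rw [Finset.card_erase_of_mem (Finset.mem_univ i)]
      simp
    calc ∑ j ∈ Finset.univ.erase i, (ε * ((m i:ℚ) + (m j:ℚ) - (d:ℚ)))
        ≤ ∑ _j ∈ Finset.univ.erase i, (2*(ν:ℚ)-3) := by
          refine Finset.sum_le_sum ?_
          intro j hj
          exact h2 i j (Finset.ne_of_mem_erase hj).symm
      _ = (2*(ν:ℚ)+2) * (2*(ν:ℚ)-3) := by
          rw [Finset.sum_const, hcard]; push_cast; ring
  have hid : ∀ i : Fin (2*ν+3),
      ∑ j ∈ Finset.univ.erase i, (ε * ((m i:ℚ) + (m j:ℚ) - (d:ℚ)))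
        = ε * ((2*(ν:ℚ)+2) * ((m i:ℚ) - (d:ℚ)) + (∑ j, (m j:ℚ)) - (m i:ℚ)) := by
    intro i
    rw [← Finset.mul_sum]
    congr 1
    have herase : ∑ j ∈ Finset.univ.erase i, (m j:ℚ)
        = (∑ j, (m j:ℚ)) - (m i:ℚ) :=
      Finset.sum_erase_eq_sub (Finset.mem_univ i)
    have hcard : (Finset.univ.erase i).card = 2*ν+2 := by
      rw [Finset.card_erase_of_mem (Finset.mem_univ i)]; simp
    have : ∑ j ∈ Finset.univ.erase i, ((m i:ℚ) + (m j:ℚ) - (d:ℚ))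
        = ∑ j ∈ Finset.univ.erase i, (((m i:ℚ) - (d:ℚ)) + (m j:ℚ)) := by
      apply Finset.sum_congr rfl; intros; ring
    rw [this, Finset.sum_add_distrib, Finset.sum_const, hcard, herase]
    push_cast; ring
  set Sq : ℚ := ∑ j, (m j:ℚ) with hSq
  have htot : ε * ((2*(ν:ℚ)+2) * (2*Sq - (2*(ν:ℚ)+3)*(d:ℚ)))
      ≤ (2*(ν:ℚ)+3) * ((2*(ν:ℚ)+2) * (2*(ν:ℚ)-3)) := by
    have h := Finset.sum_le_sum (fun i (_ : i ∈ Finset.univ) => hsum1 i)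
    rw [Finset.sum_congr rfl (fun i _ => hid i), ← Finset.mul_sum,
      Finset.sum_const, Finset.card_univ, Fintype.card_fin] at h
    have e1 : ∑ i : Fin (2*ν+3), ((2*(ν:ℚ)+2) * ((m i:ℚ) - (d:ℚ)) + Sq - (m i:ℚ))
        = (2*(ν:ℚ)+2) * (2*Sq - (2*(ν:ℚ)+3)*(d:ℚ)) := by
      rw [Finset.sum_sub_distrib, Finset.sum_add_distrib, ← Finset.mul_sum,
        Finset.sum_sub_distrib, Finset.sum_const, Finset.sum_const,
        Finset.card_univ, Fintype.card_fin]
      push_cast [hSq]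
      ring
    rw [e1, nsmul_eq_mul] at h
    push_cast at h ⊢
    linarith
  have hA : ε * (2*Sq - (2*(ν:ℚ)+3)*(d:ℚ)) ≤ (2*(ν:ℚ)+3) * (2*(ν:ℚ)-3) := by
    have hpos : (0:ℚ) < 2*(ν:ℚ)+2 := by linarith
    have := htot
    rw [show ε * ((2*(ν:ℚ)+2) * (2*Sq - (2*(ν:ℚ)+3)*(d:ℚ)))
        = (2*(ν:ℚ)+2) * (ε * (2*Sq - (2*(ν:ℚ)+3)*(d:ℚ))) from by ring,
      show (2*(ν:ℚ)+3) * ((2*(ν:ℚ)+2) * (2*(ν:ℚ)-3))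
        = (2*(ν:ℚ)+2) * ((2*(ν:ℚ)+3) * (2*(ν:ℚ)-3)) from by ring] at this
    exact le_of_mul_le_mul_left this hpos
  -- hD : Sq - 2νd ≤ m i - ν  (in ℚ, then ℤ)
  have hD : ∀ i : Fin (2*ν+3), (∑ j, m j) - 2*(ν:ℤ)*d ≤ m i - (ν:ℤ) := by
    intro i
    have hBi := hB i
    have hCi := h1 i
    have key : ε * (Sq - 2*(ν:ℚ)*(d:ℚ)) ≤ ε * ((m i:ℚ) - (ν:ℚ)) := by
      nlinarith [hA, hBi, hCi, hE,
        mul_nonneg (show (0:ℚ) ≤ 2*(ν:ℚ)-3 by linarith)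
          (show (0:ℚ) ≤ ε*(d:ℚ) - ε*(m i:ℚ) - 2 by linarith),
        mul_nonneg (show (0:ℚ) ≤ 2*(ν:ℚ)-1 by linarith)
          (show (0:ℚ) ≤ ε*(m i:ℚ) - (2*(ν:ℚ)-1) by linarith)]
    have hq : Sq - 2*(ν:ℚ)*(d:ℚ) ≤ (m i:ℚ) - (ν:ℚ) :=
      le_of_mul_le_mul_left key hε0
    have : ((∑ j, m j : ℤ) : ℚ) - 2*(ν:ℚ)*(d:ℚ) ≤ (m i:ℚ) - (ν:ℚ) := by
      rw [hSq] at hq; push_cast; push_cast at hq; linarith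
    exact_mod_cast this
  -- hMν : ν ≤ m i
  have hMν : ∀ i : Fin (2*ν+3), (ν:ℤ) ≤ m i := by
    intro i
    have : ε * (ν:ℚ) ≤ ε * (m i:ℚ) := by linarith [h1 i, hE]
    have := le_of_mul_le_mul_left this hε0
    exact_mod_cast this
  -- hF3 : ν ≤ d - m i
  have hF3 : ∀ i : Fin (2*ν+3), (ν:ℤ) ≤ d - m i := by
    intro i
    have hBi := hB i
    have : ε * (ν:ℚ) ≤ ε * ((d:ℚ) - (m i:ℚ)) := by rw [mul_sub]; linarith
    have := le_of_mul_le_mul_left this hε0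
    have : ((ν:ℤ):ℚ) ≤ ((d - m i : ℤ):ℚ) := by push_cast; linarith
    exact_mod_cast this
  -- hF4 : m j - 1 ≤ ν * (d - m i) for j ≠ i
  have hF4 : ∀ i j : Fin (2*ν+3), j ≠ i → m j - 1 ≤ (ν:ℤ) * (d - m i) := by
    intro i j hj
    have h2' := h2 i j hj.symm
    have h1j := h1 j
    have key : ε * ((m j:ℚ) - 1) ≤ ε * ((ν:ℚ) * ((d:ℚ) - (m i:ℚ))) := by
      nlinarith [hε0,
        mul_nonneg (le_of_lt hcpos)
          (show (0:ℚ) ≤ (2*(ν:ℚ)-3) - ε*((m i:ℚ) + (m j:ℚ) - (d:ℚ)) by linarith),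
        mul_nonneg (show (0:ℚ) ≤ (ν:ℚ)-1 by linarith)
          (show (0:ℚ) ≤ ε*(m j:ℚ) - (2*(ν:ℚ)-1) by linarith)]
    have hq := le_of_mul_le_mul_left key hε0
    have : ((m j - 1 : ℤ):ℚ) ≤ (((ν:ℤ) * (d - m i) : ℤ):ℚ) := by push_cast; linarith
    exact_mod_cast this
  -- build α
  set k : ℤ := max 0 ((∑ i, m i) - 2 * (ν : ℤ) * d) with hk
  have hk0 : 0 ≤ k := le_max_left _ _
  have hkm : ∀ i, k ≤ m i - ν := by
    intro i
    exact max_le (by linarith [hMν i]) (hD i)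
  have hν0 : (0:ℤ) < (ν:ℤ) := by exact_mod_cast (by omega : 0 < ν)
  refine ⟨(k + ν - 1) / ν, ?_, ?_, ?_, ?_⟩
  · exact Int.ediv_nonneg (by linarith) (le_of_lt hν0)
  all_goals
    have hdm := Int.mul_ediv_add_emod (k + ν - 1) (ν:ℤ)
    have hr0 := Int.emod_nonneg (k + ν - 1) (ne_of_gt hν0)
    have hr1 := Int.emod_lt_of_pos (k + ν - 1) hν0
  · -- k ≤ ν * α
    linarith
  · intro i
    have := hkm i
    linarith
  · intro i
    obtain ⟨j, hj⟩ := exists_ne i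
    have h4 := hF4 i j hj
    have hknu : (ν:ℤ) * ((k + ν - 1) / ν) ≤ (ν:ℤ) * (d - m i) := by
      have := hkm j
      linarith
    exact le_of_mul_le_mul_left hknu hν0
end

section
/- Let ν ≥ 2 and set n = 2ν + 1. Let ε be a rational number with 0 < ε ≤ 2/(ν² + ν), and let d, m_1, …, m_{2ν+4} be integers satisfying ε·m_i ≥ 2ν for every i and ε·(m_i + m_j − d) ≤ 2ν − 2 for all i ≠ j. Set k_C := max{0, Σ_{i=1}^{2ν+4} m_i − (2ν+1)·d}. Then there exists an integer β ≥ 0 such that k_C ≤ ν·β, (ν+1)·β ≤ m_1, ν·β ≤ m_i for every i ≥ 2, and β ≤ d − m_i for every i. (Existence of the integer β used to split off β copies of the strict transform of the pointed cone J(L_{{1}}, σ_ν) over the ν-th secant variety, of class (ν+1)H − (ν+1)E_1 − ν·Σ_{i≥2} E_i, in the odd-dimensional case of the abundance theorem.) -/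
set_option maxHeartbeats 1000000


/-- Existence of the integer `β` used to split off `β` copies of the strict transform of
the pointed cone `J(L₁, σ_ν)` over the `ν`-th secant variety in the odd-dimensional
(`n = 2ν + 1`) case of the abundance theorem: `k_C ≤ ν·β`, `(ν+1)·β ≤ m₁`,
`ν·β ≤ mᵢ` for `i ≥ 2`, and `β ≤ d - mᵢ` for all `i`. -/
theorem stmt_11 (ν : ℕ) (hν : 2 ≤ ν)
    (ε : ℚ) (hε0 : 0 < ε) (hε : ε ≤ 2 / ((ν : ℚ) ^ 2 + (ν : ℚ)))
    (d : ℤ) (m : Fin (2 * ν + 4) → ℤ)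
    (h1 : ∀ i, 2 * (ν : ℚ) ≤ ε * (m i : ℚ))
    (h2 : ∀ i j, i ≠ j → ε * ((m i : ℚ) + (m j : ℚ) - (d : ℚ)) ≤ 2 * (ν : ℚ) - 2) :
    ∃ β : ℤ, 0 ≤ β ∧
      max 0 ((∑ i, m i) - (2 * (ν : ℤ) + 1) * d) ≤ (ν : ℤ) * β ∧
      ((ν : ℤ) + 1) * β ≤ m 0 ∧
      (∀ i : Fin (2 * ν + 4), i ≠ 0 → (ν : ℤ) * β ≤ m i) ∧
      (∀ i, β ≤ d - m i) := by
  have hν2 : (2:ℚ) ≤ (ν:ℚ) := by exact_mod_cast hν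
  have hνZ : (0:ℤ) < (ν:ℤ) := by exact_mod_cast (by omega : 0 < ν)
  have hεν : ε * ((ν:ℚ)^2 + ν) ≤ 2 := by
    have hpos : (0:ℚ) < (ν:ℚ)^2 + ν := by nlinarith
    calc ε * ((ν:ℚ)^2+ν) ≤ (2/((ν:ℚ)^2+ν)) * ((ν:ℚ)^2+ν) :=
          mul_le_mul_of_nonneg_right hε hpos.le
      _ = 2 := by field_simp
  haveI : NeZero (2*ν+4) := ⟨by omega⟩
  set c : Fin (2*ν+4) := ⟨ν+2, by omega⟩ with hc
  have hne : ∀ i : Fin (2*ν+4), i + c ≠ i := by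
    intro i h
    have h0 : c = 0 := by
      have : i + c = i + 0 := by rw [h, add_zero]
      exact add_left_cancel this
    have h1 := congrArg Fin.val h0
    simp [hc, Fin.val_zero] at h1
  have hpair : ∀ i : Fin (2*ν+4), ε * ((m i:ℚ) + (m (i+c):ℚ) - d) ≤ 2*(ν:ℚ) - 2 :=
    fun i => h2 i (i+c) (Ne.symm (hne i))
  -- single-index bounds
  have hdm : ∀ i : Fin (2*ν+4), 2 ≤ ε * ((d:ℚ) - m i) := by
    intro i
    have ha := hpair i
    have hb := h1 (i + c)
    nlinarith
  have hεd : 2*(ν:ℚ)+2 ≤ ε * d := by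
    have ha := hdm 0
    have hb := h1 0
    nlinarith
  -- sum bound
  have hsum : ε * (2 * (∑ i, (m i:ℚ)) - (2*(ν:ℚ)+4) * d) ≤ (2*(ν:ℚ)+4) * (2*(ν:ℚ) - 2) := by
    have h := Finset.sum_le_sum (s := Finset.univ) (fun i _ => hpair i)
    have hcomp : ∑ i : Fin (2*ν+4), (m (i+c) : ℚ) = ∑ i, (m i:ℚ) :=
      Fintype.sum_equiv (Equiv.addRight c) _ _ (fun i => rfl)
    rw [← Finset.mul_sum, Finset.sum_sub_distrib, Finset.sum_add_distrib, hcomp,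
      Finset.sum_const, Finset.sum_const, Finset.card_univ, Fintype.card_fin,
      nsmul_eq_mul, nsmul_eq_mul] at h
    push_cast at h
    linarith
  set K : ℤ := (∑ i, m i) - (2*(ν:ℤ)+1)*d with hK
  set K' : ℤ := max 0 K with hK'
  have hK'0 : 0 ≤ K' := le_max_left 0 K
  set β : ℤ := (K' + (ν:ℤ) - 1) / (ν:ℤ) with hβ
  have hb0 : 0 ≤ β := Int.ediv_nonneg (by omega) (by omega)
  have hmod1 := Int.emod_lt_of_pos (K' + (ν:ℤ) - 1) hνZ
  have hmod2 := Int.emod_nonneg (K' + (ν:ℤ) - 1) (by omega : (ν:ℤ) ≠ 0)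
  have hdiv := Int.mul_ediv_add_emod (K' + (ν:ℤ) - 1) (ν:ℤ)
  have hb1 : K' ≤ (ν:ℤ) * β := by rw [hβ]; linarith
  have hb2 : (ν:ℤ) * β ≤ K' + (ν:ℤ) - 1 := by rw [hβ]; linarith
  have hεK' : ε * (K' : ℚ) ≤ 2*(ν:ℚ) - 2 := by
    rcases max_choice 0 K with h | h
    · rw [hK', h]; push_cast; nlinarith
    · rw [hK', h, hK]
      push_cast
      linarith [mul_nonneg (by linarith : (0:ℚ) ≤ 2*(ν:ℚ)-2)
        (by linarith : (0:ℚ) ≤ ε*d - (2*(ν:ℚ)+2)), hsum]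
  have hb2Q : (ν:ℚ) * (β:ℚ) ≤ (K':ℚ) + (ν:ℚ) - 1 := by exact_mod_cast hb2
  have hβε : ε * ((ν:ℚ) * β) ≤ 2*(ν:ℚ) - 2 + ε*((ν:ℚ)-1) := by
    have := mul_le_mul_of_nonneg_left hb2Q hε0.le
    nlinarith
  have hεν1 : ε * ((ν:ℚ) - 1) ≤ 2 := by nlinarith [mul_nonneg hε0.le (by linarith : (0:ℚ) ≤ (ν:ℚ)+1)]
  refine ⟨β, hb0, hb1, ?_, ?_, ?_⟩
  · -- (ν+1)β ≤ m 0
    have key : 0 ≤ ε * (ν:ℚ) * ((m 0:ℚ) - ((ν:ℚ)+1)*β) := by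
      nlinarith [mul_le_mul_of_nonneg_left (h1 0) (by linarith : (0:ℚ) ≤ (ν:ℚ)),
        mul_le_mul_of_nonneg_left hβε (by linarith : (0:ℚ) ≤ (ν:ℚ)+1),
        hεν, mul_nonneg hε0.le (by linarith : (0:ℚ) ≤ (ν:ℚ))]
    have hpos : (0:ℚ) < ε * (ν:ℚ) := by positivity
    have h := nonneg_of_mul_nonneg_right key hpos
    exact_mod_cast le_of_sub_nonneg h
  · -- ν β ≤ m i
    intro i _
    have key : 0 ≤ ε * ((m i:ℚ) - (ν:ℚ)*β) := by nlinarith [h1 i, hβε, hεν1]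
    have h : (0:ℚ) ≤ (m i:ℚ) - (ν:ℚ)*β := nonneg_of_mul_nonneg_right key hε0
    exact_mod_cast le_of_sub_nonneg h
  · -- β ≤ d - m i
    intro i
    have key : 0 ≤ ε * (ν:ℚ) * ((d:ℚ) - (m i:ℚ) - β) := by
      nlinarith [mul_le_mul_of_nonneg_left (hdm i) (by linarith : (0:ℚ) ≤ (ν:ℚ)), hβε, hεν1]
    have hpos : (0:ℚ) < ε * (ν:ℚ) := by positivity
    have h : (0:ℚ) ≤ (d:ℚ) - (m i:ℚ) - β := nonneg_of_mul_nonneg_right key hpos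
    have : (β:ℚ) ≤ (d:ℚ) - (m i:ℚ) := by linarith
    exact_mod_cast this
end

section
/- Let n ≥ 1, 0 ≤ r ≤ n, and let p_1, …, p_{r+1} ∈ K^n be affinely independent points. Let d ≥ 0 and m_1, …, m_{r+1} ≥ 0 be integers. Then every polynomial F ∈ K[x_1,…,x_n] of total degree ≤ d having multiplicity at least m_i at p_i for each i = 1, …, r+1 has multiplicity at least max{0, Σ_{i=1}^{r+1} m_i − r·d} at every point of the affine span of p_1, …, p_{r+1}. (The linear cycle L_I spanned by the points indexed by I is contained in the base locus of the linear system with multiplicity at least k_I = max{0, Σ_{i∈I} m_i − r·d}.) -/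
open MvPolynomial

/-- Iterated partial derivative `∂^α` as a linear endomorphism of the polynomial ring. -/
noncomputable def pd {K : Type*} [CommSemiring K] {n : ℕ} (α : Fin n → ℕ) :
    MvPolynomial (Fin n) K →ₗ[K] MvPolynomial (Fin n) K :=
  (List.finRange n).foldl
    (fun L i => ((MvPolynomial.pderiv i).toLinearMap ^ α i) ∘ₗ L) LinearMap.id

/-- `F` has multiplicity at least `m` at `p`: all partial derivatives of order `≤ m - 1`
vanish at `p`. -/
def hasMultAtLeast {K : Type*} [CommSemiring K] {n : ℕ} (m : ℕ) (p : Fin n → K)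
    (F : MvPolynomial (Fin n) K) : Prop :=
  ∀ α : Fin n → ℕ, (∑ j, α j) < m → MvPolynomial.eval p (pd α F) = 0

namespace Stmt14Aux

variable {K : Type*} [Field K] {n : ℕ}

noncomputable abbrev PP (K : Type*) [Field K] {n : ℕ} (i : Fin n) :
    Module.End K (MvPolynomial (Fin n) K) :=
  (MvPolynomial.pderiv i).toLinearMap

lemma pderiv_comm (i j : Fin n) (f : MvPolynomial (Fin n) K) :
    pderiv i (pderiv j f) = pderiv j (pderiv i f) := by
  rcases eq_or_ne i j with rfl | hij
  · rfl
  · induction f using MvPolynomial.induction_on' with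
    | monomial s a =>
      simp only [pderiv_monomial, Finsupp.tsub_apply, Finsupp.single_apply,
        if_neg hij, if_neg (Ne.symm hij), Nat.sub_zero]
      rw [tsub_right_comm, mul_right_comm]
    | add p q hp hq => simp [hp, hq]

lemma commute_PP (i j : Fin n) : Commute (PP K i) (PP K j) := by
  apply LinearMap.ext
  intro f
  simp only [Module.End.mul_apply]
  exact pderiv_comm i j f

noncomputable def prodOf (K : Type*) [Field K] {n : ℕ} (α : Fin n → ℕ) (l : List (Fin n)) :
    Module.End K (MvPolynomial (Fin n) K) :=
  (l.map fun i => PP K i ^ α i).prod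

lemma commute_pow_prodOf (j : Fin n) (k : ℕ) (α : Fin n → ℕ) (l : List (Fin n)) :
    Commute (PP K j ^ k) (prodOf K α l) := by
  apply Commute.list_prod_right
  intro x hx
  rcases List.mem_map.mp hx with ⟨i, _, rfl⟩
  exact (commute_PP j i).pow_pow k (α i)

lemma prodOf_nil (α : Fin n → ℕ) : prodOf K α [] = 1 := rfl

lemma prodOf_cons (α : Fin n → ℕ) (i : Fin n) (l : List (Fin n)) :
    prodOf K α (i :: l) = PP K i ^ α i * prodOf K α l := by
  simp [prodOf]

lemma foldl_comp_eq {M : Type*} [Monoid M] {ι : Type*} (g : ι → M) :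
    ∀ (l : List ι) (x : M), l.foldl (fun L i => g i * L) x = (l.reverse.map g).prod * x := by
  intro l
  induction l with
  | nil => intro x; simp
  | cons a l ih => intro x; simp [ih, mul_assoc]

lemma pd_eq_prodOf (α : Fin n → ℕ) :
    pd (K := K) α = prodOf K α (List.finRange n).reverse := by
  have h : pd (K := K) α
      = (List.finRange n).foldl (fun L i => (PP K i ^ α i) * L) 1 := rfl
  rw [h, foldl_comp_eq, mul_one]
  rfl

lemma prodOf_add (α β : Fin n → ℕ) (l : List (Fin n)) :
    prodOf K (fun i => α i + β i) l = prodOf K α l * prodOf K β l := by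
  induction l with
  | nil =>
    rw [prodOf_nil, prodOf_nil, prodOf_nil, mul_one]
  | cons i l ih =>
    rw [prodOf_cons, prodOf_cons, prodOf_cons, ih, pow_add]
    have hc := (commute_pow_prodOf (K := K) i (β i) α l).eq
    rw [mul_assoc, ← mul_assoc (PP K i ^ β i) (prodOf K α l), hc, mul_assoc, mul_assoc]

lemma prodOf_of_zero {α : Fin n → ℕ} {l : List (Fin n)} (h : ∀ i ∈ l, α i = 0) :
    prodOf K α l = 1 := by
  unfold prodOf
  rw [List.prod_eq_one]
  intro x hx
  rcases List.mem_map.mp hx with ⟨i, hi, rfl⟩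
  rw [h i hi, pow_zero]

lemma prodOf_single {j : Fin n} :
    ∀ {l : List (Fin n)}, l.Nodup → j ∈ l →
      prodOf K (fun i => if i = j then 1 else 0) l = PP K j := by
  intro l
  induction l with
  | nil => intro _ h; simp at h
  | cons i l ih =>
    intro hnd hmem
    rw [prodOf_cons]
    rcases List.mem_cons.mp hmem with rfl | hjl
    · rw [if_pos rfl, pow_one, prodOf_of_zero (fun x hx => ?_), mul_one]
      rw [if_neg]
      intro hxj
      exact (List.nodup_cons.mp hnd).1 (hxj ▸ hx)
    · have hij : i ≠ j := by
        rintro rfl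
        exact (List.nodup_cons.mp hnd).1 hjl
      rw [if_neg hij, pow_zero, one_mul, ih (List.nodup_cons.mp hnd).2 hjl]

lemma pd_add_apply (α β : Fin n → ℕ) (F : MvPolynomial (Fin n) K) :
    pd (fun i => α i + β i) F = pd α (pd β F) := by
  rw [pd_eq_prodOf, pd_eq_prodOf, pd_eq_prodOf, prodOf_add]
  rfl

lemma pd_zero_apply (F : MvPolynomial (Fin n) K) : pd (fun _ => 0) F = F := by
  rw [pd_eq_prodOf, prodOf_of_zero (fun _ _ => rfl)]
  rfl

lemma pd_single_apply (j : Fin n) (F : MvPolynomial (Fin n) K) :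
    pd (fun i => if i = j then 1 else 0) F = pderiv j F := by
  rw [pd_eq_prodOf, prodOf_single (List.nodup_reverse.mpr (List.nodup_finRange n))
    (List.mem_reverse.mpr (List.mem_finRange j))]
  rfl

lemma pderiv_eq_zero_of_totalDegree_eq_zero {f : MvPolynomial (Fin n) K}
    (h : f.totalDegree = 0) (j : Fin n) : pderiv j f = 0 := by
  rw [f.as_sum, map_sum]
  apply Finset.sum_eq_zero
  intro v hv
  have hv0 : v j = 0 := (totalDegree_eq_zero_iff (Fin n) f).mp h v hv j
  rw [pderiv_monomial, hv0, Nat.cast_zero, mul_zero, monomial_zero]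

lemma td_pderiv (j : Fin n) (f : MvPolynomial (Fin n) K) :
    (pderiv j f).totalDegree ≤ f.totalDegree - 1 := by
  conv_lhs => rw [f.as_sum]
  rw [map_sum]
  refine (totalDegree_finset_sum _ _).trans (Finset.sup_le fun v hv => ?_)
  rw [pderiv_monomial]
  by_cases hj : v j = 0
  · rw [hj, Nat.cast_zero, mul_zero, monomial_zero, totalDegree_zero]
    exact Nat.zero_le _
  · refine (totalDegree_monomial_le _ _).trans ?_
    have hsum := Finsupp.sum_fintype (v - Finsupp.single j 1) (fun _ => (id : ℕ → ℕ))
      (fun _ => rfl)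
    have hle : (v.sum fun _ e => e) ≤ f.totalDegree := le_totalDegree hv
    rw [show (v.sum fun _ e => e) = ∑ i, v i from Finsupp.sum_fintype _ _ (fun _ => rfl)] at hle
    have h1 : ∑ i, (v - Finsupp.single j 1 : Fin n →₀ ℕ) i
        = (∑ i ∈ Finset.univ.erase j, v i) + (v j - 1) := by
      rw [← Finset.sum_erase_add _ _ (Finset.mem_univ j)]
      congr 1
      · refine Finset.sum_congr rfl fun i hi => ?_
        rw [Finsupp.tsub_apply, Finsupp.single_apply,
          if_neg (Finset.ne_of_mem_erase hi).symm, Nat.sub_zero]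
      · rw [Finsupp.tsub_apply, Finsupp.single_apply, if_pos rfl]
    have h2 : ∑ i, v i = (∑ i ∈ Finset.univ.erase j, v i) + v j := by
      rw [← Finset.sum_erase_add _ _ (Finset.mem_univ j)]
    rw [hsum]
    simp only [id_eq]
    rw [h1]
    omega

lemma td_PP_pow (j : Fin n) (k : ℕ) :
    ∀ f : MvPolynomial (Fin n) K, ((PP K j ^ k) f).totalDegree ≤ f.totalDegree - k := by
  induction k with
  | zero => intro f; simp
  | succ k ih =>
    intro f
    rw [pow_succ, Module.End.mul_apply]
    refine (ih _).trans ?_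
    have h2 := td_pderiv j f
    have h3 : (PP K j) f = pderiv j f := rfl
    rw [h3]
    omega

lemma PP_pow_eq_zero (j : Fin n) (k : ℕ) :
    ∀ f : MvPolynomial (Fin n) K, f.totalDegree < k → (PP K j ^ k) f = 0 := by
  induction k with
  | zero => intro f h; omega
  | succ k ih =>
    intro f h
    rw [pow_succ, Module.End.mul_apply]
    rcases Nat.eq_zero_or_pos k with rfl | hk
    · rw [pow_zero, Module.End.one_apply]
      exact pderiv_eq_zero_of_totalDegree_eq_zero (by omega) j
    · apply ih
      have h2 := td_pderiv j f
      have h3 : (PP K j) f = pderiv j f := rfl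
      rw [h3]
      omega

lemma td_prodOf (α : Fin n → ℕ) (l : List (Fin n)) (f : MvPolynomial (Fin n) K) :
    ((prodOf K α l) f).totalDegree ≤ f.totalDegree - (l.map α).sum := by
  induction l with
  | nil => simp [prodOf_nil]
  | cons i l ih =>
    rw [prodOf_cons, Module.End.mul_apply]
    refine (td_PP_pow i (α i) _).trans ?_
    have := ih
    simp only [List.map_cons, List.sum_cons]
    omega

lemma prodOf_eq_zero (α : Fin n → ℕ) (l : List (Fin n)) (f : MvPolynomial (Fin n) K)
    (h : f.totalDegree < (l.map α).sum) : (prodOf K α l) f = 0 := by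
  induction l with
  | nil => simp at h
  | cons i l ih =>
    rw [prodOf_cons, Module.End.mul_apply]
    simp only [List.map_cons, List.sum_cons] at h
    by_cases hl : f.totalDegree < (l.map α).sum
    · rw [ih hl, map_zero]
    · apply PP_pow_eq_zero
      have := td_prodOf α l f
      omega

lemma sum_map_finRange (α : Fin n → ℕ) :
    (((List.finRange n).reverse).map α).sum = ∑ i, α i := by
  rw [List.map_reverse, List.sum_reverse, ← List.ofFn_eq_map, List.sum_ofFn]

lemma td_pd (α : Fin n → ℕ) (f : MvPolynomial (Fin n) K) :
    (pd α f).totalDegree ≤ f.totalDegree - ∑ i, α i := by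
  rw [pd_eq_prodOf]
  rw [← sum_map_finRange α]
  exact td_prodOf α (List.finRange n).reverse f

lemma pd_eq_zero (α : Fin n → ℕ) (f : MvPolynomial (Fin n) K)
    (h : f.totalDegree < ∑ i, α i) : pd α f = 0 := by
  rw [pd_eq_prodOf]
  exact prodOf_eq_zero α _ f (by rwa [sum_map_finRange])

noncomputable def Dv (v : Fin n → K) : Module.End K (MvPolynomial (Fin n) K) :=
  ∑ j, v j • PP K j

lemma Dv_apply (v : Fin n → K) (f : MvPolynomial (Fin n) K) :
    Dv v f = ∑ j, v j • pderiv j f := by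
  simp [Dv]

lemma eval_Dv_pow (v x : Fin n → K) :
    ∀ (k : ℕ) (F : MvPolynomial (Fin n) K),
      (∀ β : Fin n → ℕ, (∑ j, β j) = k → eval x (pd β F) = 0) →
      eval x ((Dv v ^ k) F) = 0 := by
  intro k
  induction k with
  | zero =>
    intro F h
    rw [pow_zero, Module.End.one_apply]
    have := h (fun _ => 0) (by simp)
    rwa [pd_zero_apply] at this
  | succ k ih =>
    intro F h
    rw [pow_succ, Module.End.mul_apply]
    apply ih
    intro β hβ
    have hrw : pd β ((Dv v) F)
        = ∑ j, v j • pd (fun i => β i + if i = j then 1 else 0) F := by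
      rw [Dv_apply, map_sum]
      refine Finset.sum_congr rfl fun j _ => ?_
      rw [map_smul, pd_add_apply, pd_single_apply]
    rw [hrw, map_sum]
    apply Finset.sum_eq_zero
    intro j _
    rw [smul_eq_C_mul, eval_mul, eval_C, h _ ?_, mul_zero]
    rw [Finset.sum_add_distrib, hβ, Finset.sum_ite_eq' Finset.univ j (fun _ => 1),
      if_pos (Finset.mem_univ j)]

lemma derivative_aeval_line (s v : Fin n → K) (F : MvPolynomial (Fin n) K) :
    Polynomial.derivative
        (aeval (fun j => Polynomial.C (s j) + Polynomial.C (v j) * Polynomial.X) F)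
      = aeval (fun j => Polynomial.C (s j) + Polynomial.C (v j) * Polynomial.X) (Dv v F) := by
  set g : Fin n → Polynomial K :=
    fun j => Polynomial.C (s j) + Polynomial.C (v j) * Polynomial.X with hg
  have hdg : ∀ j, Polynomial.derivative (g j) = Polynomial.C (v j) := by
    intro j; simp [hg]
  induction F using MvPolynomial.induction_on with
  | C a => simp [Dv_apply]
  | add p q hp hq => simp only [map_add, Polynomial.derivative_add, hp, hq]
  | mul_X p i hp =>
    have hDv : Dv v (p * X i) = (Dv v p) * X i + v i • p := by
      rw [Dv_apply]
      have : ∀ j, pderiv j (p * X i)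
          = pderiv j p * X i
            + p * (Pi.single (M := fun _ => MvPolynomial (Fin n) K) j 1 i) := by
        intro j; rw [pderiv_mul, pderiv_X]
      simp only [this, smul_add]
      rw [Finset.sum_add_distrib]
      congr 1
      · rw [Dv_apply, Finset.sum_mul]
        refine Finset.sum_congr rfl fun j _ => ?_
        rw [smul_mul_assoc]
      · rw [Finset.sum_eq_single i]
        · rw [Pi.single_eq_same, mul_one]
        · intro j _ hj
          rw [Pi.single_eq_of_ne (Ne.symm hj), mul_zero, smul_zero]
        · intro h; exact absurd (Finset.mem_univ i) h
    rw [show (p * X i : MvPolynomial (Fin n) K) = p * X i from rfl]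
    rw [map_mul, aeval_X, Polynomial.derivative_mul, hp, hdg i, hDv, map_add, map_mul,
      aeval_X, smul_eq_C_mul, map_mul, aeval_C, Polynomial.algebraMap_eq]
    ring

lemma iterate_derivative_aeval_line (s v : Fin n → K) (k : ℕ) :
    ∀ F : MvPolynomial (Fin n) K,
      Polynomial.derivative^[k]
          (aeval (fun j => Polynomial.C (s j) + Polynomial.C (v j) * Polynomial.X) F)
        = aeval (fun j => Polynomial.C (s j) + Polynomial.C (v j) * Polynomial.X)
            ((Dv v ^ k) F) := by
  induction k with
  | zero => intro F; simp
  | succ k ih =>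
    intro F
    rw [Function.iterate_succ_apply, derivative_aeval_line, ih, pow_succ,
      Module.End.mul_apply]

lemma mv_aeval_self {σ : Type*} (y : σ → K) (F : MvPolynomial σ K) :
    (MvPolynomial.aeval y) F = eval y F := by
  induction F using MvPolynomial.induction_on with
  | C a => simp
  | add p q hp hq => simp only [map_add, hp, hq]
  | mul_X p i hp => simp only [map_mul, aeval_X, eval_X, hp]

lemma polyEval_aeval (g : Fin n → Polynomial K) (x : K) (F : MvPolynomial (Fin n) K) :
    Polynomial.eval x (aeval g F) = eval (fun j => (g j).eval x) F := by
  induction F using MvPolynomial.induction_on with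
  | C a => simp
  | add p q hp hq => simp [hp, hq]
  | mul_X p i hp => simp [hp]

lemma eval_aeval_mv {r' : ℕ} (g : Fin n → MvPolynomial (Fin r') K) (x : Fin r' → K)
    (F : MvPolynomial (Fin n) K) :
    eval x (aeval g F) = eval (fun j => eval x (g j)) F := by
  induction F using MvPolynomial.induction_on with
  | C a => simp
  | add p q hp hq => simp only [map_add, hp, hq]
  | mul_X p i hp => simp only [map_mul, aeval_X, eval_X, hp]

lemma uni_vanish [CharZero K] {f : Polynomial K} {d a b : ℕ}
    (hd : f.natDegree ≤ d)
    (h0 : ∀ k < a, (Polynomial.derivative^[k] f).eval (0 : K) = 0)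
    (h1 : ∀ k < b, (Polynomial.derivative^[k] f).eval (1 : K) = 0)
    (hab : d < a + b) : f = 0 := by
  by_contra hf
  have key : ∀ (c : ℕ) (t : K), (∀ k < c, (Polynomial.derivative^[k] f).eval t = 0) →
      c ≤ f.rootMultiplicity t := by
    intro c t hc
    rcases Nat.eq_zero_or_pos c with rfl | hcpos
    · exact Nat.zero_le _
    have hfac : ((c - 1).factorial : K) ∈ nonZeroDivisors K :=
      mem_nonZeroDivisors_of_ne_zero (by
        exact_mod_cast Nat.cast_ne_zero (R := K).mpr (Nat.factorial_ne_zero (c - 1)))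
    have := Polynomial.lt_rootMultiplicity_of_isRoot_iterate_derivative_of_mem_nonZeroDivisors
      (p := f) (t := t) (n := c - 1) hf (fun m hm => hc m (by omega)) hfac
    omega
  have hm0 := key a 0 h0
  have hm1 := key b 1 h1
  have hdvd0 : ((Polynomial.X : Polynomial K) - Polynomial.C 0) ^ a ∣ f :=
    (pow_dvd_pow _ hm0).trans (f.pow_rootMultiplicity_dvd 0)
  have hdvd1 : ((Polynomial.X : Polynomial K) - Polynomial.C 1) ^ b ∣ f :=
    (pow_dvd_pow _ hm1).trans (f.pow_rootMultiplicity_dvd 1)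
  have hcop : IsCoprime ((Polynomial.X : Polynomial K) - Polynomial.C 0)
      ((Polynomial.X : Polynomial K) - Polynomial.C 1) := by
    apply Polynomial.isCoprime_X_sub_C_of_isUnit_sub
    simp
  have hdvd : ((Polynomial.X : Polynomial K) - Polynomial.C 0) ^ a
      * ((Polynomial.X : Polynomial K) - Polynomial.C 1) ^ b ∣ f :=
    (hcop.pow).mul_dvd hdvd0 hdvd1
  have hle := Polynomial.natDegree_le_of_dvd hdvd hf
  rw [Polynomial.natDegree_mul (pow_ne_zero _ (Polynomial.X_sub_C_ne_zero (0 : K)))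
      (pow_ne_zero _ (Polynomial.X_sub_C_ne_zero (1 : K))),
    Polynomial.natDegree_pow, Polynomial.natDegree_pow, Polynomial.natDegree_X_sub_C,
    Polynomial.natDegree_X_sub_C, mul_one, mul_one] at hle
  omega

lemma reduceAux [CharZero K] {r : ℕ} (p : Fin (r + 1) → Fin n → K)
    (hvan : ∀ (d : ℕ) (m : Fin (r + 1) → ℕ) (F : MvPolynomial (Fin n) K),
      F.totalDegree ≤ d → (∀ i, hasMultAtLeast (m i) (p i) F) →
      ((r : ℤ) * d < ∑ i, (m i : ℤ)) → ∀ q ∈ affineSpan K (Set.range p), eval q F = 0)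
    (d : ℕ) (m : Fin (r + 1) → ℕ) (F : MvPolynomial (Fin n) K)
    (hdeg : F.totalDegree ≤ d) (hmult : ∀ i, hasMultAtLeast (m i) (p i) F)
    (α : Fin n → ℕ) (hα : ((∑ j, α j : ℕ) : ℤ) + r * d < ∑ i, (m i : ℤ)) :
    ∀ q ∈ affineSpan K (Set.range p), eval q (pd α F) = 0 := by
  intro q hq
  set t := ∑ j, α j with ht
  by_cases htd : d < t
  · rw [pd_eq_zero α F (lt_of_le_of_lt hdeg htd), map_zero]
  · push_neg at htd
    refine hvan (d - t) (fun i => m i - t) (pd α F) ?_ ?_ ?_ q hq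
    · exact (td_pd α F).trans (Nat.sub_le_sub_right hdeg t)
    · intro i γ hγ
      rw [← pd_add_apply]
      refine hmult i _ ?_
      have hsplit : (∑ j, (γ j + α j)) = (∑ j, γ j) + t := by
        rw [Finset.sum_add_distrib]
      have hγ' : (∑ j, γ j) < m i - t := hγ
      omega
    · have hs : ∑ i, ((m i : ℤ) - t) ≤ ∑ i, ((m i - t : ℕ) : ℤ) :=
        Finset.sum_le_sum (fun i _ => by omega)
      have hsum2 : ∑ i, ((m i : ℤ) - (t : ℤ)) = (∑ i, (m i : ℤ)) - (r + 1) * t := by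
        rw [Finset.sum_sub_distrib, Finset.sum_const, Finset.card_univ, Fintype.card_fin]
        push_cast
        ring
      have h1 : ((d - t : ℕ) : ℤ) = (d : ℤ) - t := by omega
      have hexp : ((r : ℤ) + 1) * t = r * t + t := by ring
      have hgoal : (r : ℤ) * ((d - t : ℕ) : ℤ) < ∑ i, ((m i - t : ℕ) : ℤ) := by
        rw [h1]
        have : (r : ℤ) * ((d : ℤ) - t) = r * d - r * t := by ring
        rw [this]
        rw [hsum2, hexp] at hs
        linarith
      exact hgoal


lemma line_eval_deriv (s v y : Fin n → K) (k : ℕ) (F : MvPolynomial (Fin n) K) (x : K)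
    (h : ∀ j, s j + v j * x = y j) :
    Polynomial.eval x (Polynomial.derivative^[k]
        (aeval (fun j => Polynomial.C (s j) + Polynomial.C (v j) * Polynomial.X) F))
      = eval y ((Dv v ^ k) F) := by
  rw [iterate_derivative_aeval_line s v k F, polyEval_aeval]
  have hy : (fun j => Polynomial.eval x
      (Polynomial.C (s j) + Polynomial.C (v j) * Polynomial.X)) = y := by
    funext j
    simp only [Polynomial.eval_add, Polynomial.eval_C, Polynomial.eval_mul,
      Polynomial.eval_X]
    exact h j
  rw [hy]

lemma line_eval (s v y : Fin n → K) (F : MvPolynomial (Fin n) K) (x : K)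
    (h : ∀ j, s j + v j * x = y j) :
    Polynomial.eval x
        (aeval (fun j => Polynomial.C (s j) + Polynomial.C (v j) * Polynomial.X) F)
      = eval y F := by
  have := line_eval_deriv s v y 0 F x h
  simpa using this

lemma vanish [CharZero K] :
    ∀ (r : ℕ) (p : Fin (r + 1) → Fin n → K) (d : ℕ) (m : Fin (r + 1) → ℕ)
      (F : MvPolynomial (Fin n) K), F.totalDegree ≤ d →
      (∀ i, hasMultAtLeast (m i) (p i) F) → ((r : ℤ) * d < ∑ i, (m i : ℤ)) →
      ∀ q ∈ affineSpan K (Set.range p), eval q F = 0 := by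
  intro r
  induction r with
  | zero =>
    intro p d m F hdeg hmult hsum q hq
    have hrange : Set.range p = {p 0} := by
      apply Set.eq_singleton_iff_unique_mem.mpr
      refine ⟨⟨0, rfl⟩, ?_⟩
      rintro y ⟨i, rfl⟩
      have h1 : i = 0 := Fin.ext (Nat.lt_one_iff.mp i.isLt)
      rw [h1]
    rw [hrange, AffineSubspace.mem_affineSpan_singleton] at hq
    subst hq
    have h0' : (0 : ℤ) < m 0 := by simpa using hsum
    have h0 : 0 < m 0 := by exact_mod_cast h0'
    have := hmult 0 (fun _ => 0) (by simpa using h0)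
    rwa [pd_zero_apply] at this
  | succ r ih =>
    intro p d m F hdeg hmult hsum
    have hS : ∀ s ∈ affineSpan K (Set.range fun i : Fin (r + 1) => p i.castSucc),
        ∀ β : Fin n → ℕ,
        (∑ j, β j) < ((∑ i : Fin (r + 1), (m i.castSucc : ℤ)) - r * d).toNat →
        eval s (pd β F) = 0 := by
      intro s hs β hβ
      refine reduceAux (fun i : Fin (r + 1) => p i.castSucc)
        (fun d m F h1 h2 h3 => ih _ d m F h1 h2 h3)
        d (fun i => m i.castSucc) F hdeg (fun i => hmult i.castSucc) β ?_ s hs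
      have hlt : ((∑ j, β j : ℕ) : ℤ)
          < (∑ i : Fin (r + 1), (m i.castSucc : ℤ)) - r * d := Int.lt_toNat.mp hβ
      linarith
    set a : ℕ := ((∑ i : Fin (r + 1), (m i.castSucc : ℤ)) - r * d).toNat with ha
    set Φ : Fin n → MvPolynomial (Fin (r + 1)) K :=
      fun j => C (p (Fin.last (r + 1)) j)
        + ∑ i, C (p i.castSucc j - p (Fin.last (r + 1)) j) * X i with hΦ
    have hd_ab : (d : ℤ) < (a : ℤ) + m (Fin.last (r + 1)) := by
      have h1 : (∑ i : Fin (r + 1), (m i.castSucc : ℤ)) - r * d ≤ (a : ℤ) :=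
        Int.self_le_toNat _
      have h2 : (∑ i : Fin (r + 2), (m i : ℤ))
          = (∑ i : Fin (r + 1), (m i.castSucc : ℤ)) + m (Fin.last (r + 1)) :=
        Fin.sum_univ_castSucc _
      rw [h2] at hsum
      push_cast at hsum
      linarith
    have key : ∀ t : Fin (r + 1) → K, (∑ i, t i) ≠ 0 → eval t (aeval Φ F) = 0 := by
      intro t hσ
      set w : Fin (r + 1) → K := fun i => t i / (∑ i, t i) with hw
      have hw1 : ∑ i, w i = 1 := by
        simp only [hw]
        rw [← Finset.sum_div, div_self hσ]
      set s : Fin n → K := ∑ i, w i • p i.castSucc with hs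
      have hs_mem : s ∈ affineSpan K (Set.range fun i : Fin (r + 1) => p i.castSucc) := by
        have hmem := affineCombination_mem_affineSpan (k := K) (s := Finset.univ) hw1
          (fun i : Fin (r + 1) => p i.castSucc)
        rwa [Finset.affineCombination_eq_linear_combination _ _ _ hw1] at hmem
      set v : Fin n → K := fun j => p (Fin.last (r + 1)) j - s j with hv
      have hs_coord : ∀ j, s j = ∑ i, w i * p i.castSucc j := by
        intro j
        rw [hs, Finset.sum_apply]
        exact Finset.sum_congr rfl fun i _ => rfl
      have hf0 : aeval
          (fun j => Polynomial.C (s j) + Polynomial.C (v j) * Polynomial.X) F = 0 := by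
        refine uni_vanish (d := d) (a := a) (b := m (Fin.last (r + 1))) ?_ ?_ ?_ ?_
        · have hdeg1 : ∀ j, (Polynomial.C (s j)
              + Polynomial.C (v j) * Polynomial.X).natDegree ≤ 1 := by
            intro j
            refine (Polynomial.natDegree_add_le _ _).trans ?_
            simp only [Polynomial.natDegree_C, max_le_iff]
            exact ⟨Nat.zero_le _,
              (Polynomial.natDegree_C_mul_le _ _).trans_eq Polynomial.natDegree_X⟩
          simpa using MvPolynomial.aeval_natDegree_le F hdeg _ hdeg1
        · intro k hk
          rw [line_eval_deriv s v s k F 0 (fun j => by ring)]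
          exact eval_Dv_pow v s k F (fun β hβ => hS s hs_mem β (by omega))
        · intro k hk
          rw [line_eval_deriv s v (p (Fin.last (r + 1))) k F 1 (fun j => by
            simp only [hv]; ring)]
          exact eval_Dv_pow v (p (Fin.last (r + 1))) k F
            (fun β hβ => hmult (Fin.last (r + 1)) β (by omega))
        · exact_mod_cast hd_ab
      have hpt : ∀ j, s j + v j * (1 - ∑ i, t i) = eval t (Φ j) := by
        intro j
        have h1 : eval t (Φ j)
            = p (Fin.last (r + 1)) j
              + ∑ i, (p i.castSucc j - p (Fin.last (r + 1)) j) * t i := by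
          simp [hΦ]
        have h3 : ∑ i, (p i.castSucc j - p (Fin.last (r + 1)) j) * t i
            = (∑ i, t i * p i.castSucc j) - (∑ i, t i) * p (Fin.last (r + 1)) j := by
          rw [Finset.sum_mul, ← Finset.sum_sub_distrib]
          exact Finset.sum_congr rfl fun i _ => by ring
        have h4 : (∑ i, t i) * ∑ i, w i * p i.castSucc j = ∑ i, t i * p i.castSucc j := by
          rw [Finset.mul_sum]
          refine Finset.sum_congr rfl fun i _ => ?_
          simp only [hw]
          field_simp
        rw [h1, h3]
        simp only [hv]
        have h6 : (∑ i, t i) * s j = ∑ i, t i * p i.castSucc j := by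
          rw [hs_coord j]
          exact h4
        linear_combination h6
      have heq : Polynomial.eval (1 - ∑ i, t i)
          (aeval (fun j => Polynomial.C (s j) + Polynomial.C (v j) * Polynomial.X) F)
          = eval t (aeval Φ F) := by
        rw [eval_aeval_mv]
        exact line_eval s v _ F _ hpt
      rw [← heq, hf0, Polynomial.eval_zero]
    have hGzero : aeval Φ F = 0 := by
      have hprod : aeval Φ F * (∑ i, (X i : MvPolynomial (Fin (r + 1)) K)) = 0 := by
        apply MvPolynomial.funext
        intro x
        rw [eval_mul, map_zero]
        by_cases hx : (∑ i, x i) = 0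
        · have hX : eval x (∑ i, (X i : MvPolynomial (Fin (r + 1)) K)) = 0 := by
            rw [map_sum]
            simpa using hx
          rw [hX, mul_zero]
        · rw [key x hx, zero_mul]
      have hXne : (∑ i : Fin (r + 1), (X i : MvPolynomial (Fin (r + 1)) K)) ≠ 0 := by
        intro h
        have h0 := congrArg (MvPolynomial.coeff (Finsupp.single (0 : Fin (r + 1)) 1)) h
        rw [MvPolynomial.coeff_zero, MvPolynomial.coeff_sum] at h0
        have hterm : ∀ i : Fin (r + 1),
            MvPolynomial.coeff (Finsupp.single (0 : Fin (r + 1)) 1)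
              (X i : MvPolynomial (Fin (r + 1)) K)
            = if i = 0 then 1 else 0 := by
          intro i
          classical
          rw [MvPolynomial.coeff_X']
          congr 1
          simp [Finsupp.single_left_inj (one_ne_zero (α := ℕ))]
        rw [Finset.sum_congr rfl (fun i _ => hterm i), Finset.sum_ite_eq'
          Finset.univ (0 : Fin (r + 1)) (fun _ => (1 : K)),
          if_pos (Finset.mem_univ _)] at h0
        exact one_ne_zero h0
      rcases mul_eq_zero.mp hprod with h | h
      · exact h
      · exact absurd h hXne
    intro q hq
    obtain ⟨w, hw1, rfl⟩ := eq_affineCombination_of_mem_affineSpan_of_fintype hq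
    rw [Finset.affineCombination_eq_linear_combination _ _ _ hw1]
    have hq_coord : (fun j => MvPolynomial.eval (fun i : Fin (r + 1) => w i.castSucc) (Φ j))
        = (∑ i, w i • p i) := by
      funext j
      have h1 : MvPolynomial.eval (fun i : Fin (r + 1) => w i.castSucc) (Φ j)
          = p (Fin.last (r + 1)) j
            + ∑ i : Fin (r + 1), (p i.castSucc j - p (Fin.last (r + 1)) j) * w i.castSucc := by
        simp [hΦ]
      have h2 : (∑ i, w i • p i) j = ∑ i : Fin (r + 2), w i * p i j := by
        rw [Finset.sum_apply]
        exact Finset.sum_congr rfl fun i _ => rfl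
      have h3 : ∑ i : Fin (r + 2), w i * p i j
          = (∑ i : Fin (r + 1), w i.castSucc * p i.castSucc j)
            + w (Fin.last (r + 1)) * p (Fin.last (r + 1)) j :=
        Fin.sum_univ_castSucc _
      have h4 : (∑ i : Fin (r + 1), w i.castSucc) + w (Fin.last (r + 1)) = 1 := by
        rw [← Fin.sum_univ_castSucc]
        exact hw1
      have h5 : ∑ i : Fin (r + 1), (p i.castSucc j - p (Fin.last (r + 1)) j) * w i.castSucc
          = (∑ i : Fin (r + 1), w i.castSucc * p i.castSucc j)
            - (∑ i : Fin (r + 1), w i.castSucc) * p (Fin.last (r + 1)) j := by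
        rw [Finset.sum_mul, ← Finset.sum_sub_distrib]
        exact Finset.sum_congr rfl fun i _ => by ring
      rw [h1, h2, h3, h5]
      linear_combination (-(p (Fin.last (r + 1)) j)) * h4
    have heval : eval (∑ i, w i • p i) F
        = eval (fun i : Fin (r + 1) => w i.castSucc) (aeval Φ F) := by
      rw [eval_aeval_mv, hq_coord]
    rw [heval, hGzero, map_zero]

end Stmt14Aux

/-- The linear cycle spanned by `r + 1` affinely independent points is contained in the
base locus with multiplicity at least `k_I = max{0, Σᵢ mᵢ - r·d}`: every polynomial of
degree `≤ d` with multiplicity `≥ mᵢ` at `pᵢ` has multiplicity at least `k_I` at every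
point of the affine span of the `pᵢ`. -/
theorem stmt_14 {K : Type*} [Field K] [IsAlgClosed K] [CharZero K]
    (n r d : ℕ) (hn : 1 ≤ n) (hr : r ≤ n) (m : Fin (r + 1) → ℕ)
    (p : Fin (r + 1) → Fin n → K) (hindep : AffineIndependent K p)
    (F : MvPolynomial (Fin n) K) (hdeg : F.totalDegree ≤ d)
    (hmult : ∀ i, hasMultAtLeast (m i) (p i) F) :
    ∀ q ∈ affineSpan K (Set.range p),
      hasMultAtLeast (((∑ i, (m i : ℤ)) - (r : ℤ) * d).toNat) q F := by
  intro q hq α hα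
  refine Stmt14Aux.reduceAux p
    (fun d m F h1 h2 h3 => Stmt14Aux.vanish r p d m F h1 h2 h3)
    d m F hdeg hmult α ?_ q hq
  have := Int.lt_toNat.mp hα
  linarith
end
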